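/- For any two orthonormal bases {φ_j} and {φ_k'} of a finite-dimensional complex Hilbert space ℂ^d with d ≥ 2, there exist two non-parallel unit vectors ψ₊ and ψ₋ such that |⟨ξ, ψ₊⟩|² = |⟨ξ, ψ₋⟩|² for every vector ξ in either basis. Consequently, two orthonormal bases cannot distinguish all pure states. -/

import Mathlib

open scoped InnerProductSpace

set_option maxHeartbeats 1000000

private lemma norm_sq_add_eq_sub' {A B : ℂ} (h : (A * (starRingEnd ℂ) B).re = 0) :
    ‖A + B‖ ^ 2 = ‖A - B‖ ^ 2 := by
  have h' : A.re * B.re + A.im * B.im = 0 := by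
    simp [Complex.mul_re] at h; linarith
  have e : ∀ z : ℂ, ‖z‖ ^ 2 = z.re * z.re + z.im * z.im := by
    intro z
    rw [Complex.sq_norm, Complex.normSq_apply]
  rw [e, e]
  simp only [Complex.add_re, Complex.add_im, Complex.sub_re, Complex.sub_im]
  nlinarith [h']

/-- Two orthonormal bases of `ℂ^d` (`d ≥ 2`) cannot distinguish all pure states:
there are two non-parallel unit vectors giving the same probabilities in both bases. -/
theorem two_bases_cannot_distinguish (d : ℕ) (hd : 2 ≤ d)
    (B₁ B₂ : OrthonormalBasis (Fin d) ℂ (EuclideanSpace ℂ (Fin d))) :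
    ∃ ψp ψm : EuclideanSpace ℂ (Fin d),
      ‖ψp‖ = 1 ∧ ‖ψm‖ = 1 ∧
      (¬ ∃ c : ℂ, ψp = c • ψm) ∧
      (∀ j : Fin d, ‖⟪B₁ j, ψp⟫_ℂ‖ ^ 2 = ‖⟪B₁ j, ψm⟫_ℂ‖ ^ 2) ∧
      (∀ j : Fin d, ‖⟪B₂ j, ψp⟫_ℂ‖ ^ 2 = ‖⟪B₂ j, ψm⟫_ℂ‖ ^ 2) := by
  classical
  have hd0 : 0 < d := by omega
  set η : EuclideanSpace ℂ (Fin d) := B₁ ⟨0, hd0⟩ with hηdef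
  have hite : ∀ i j, ⟪B₁ i, B₁ j⟫_ℂ = if i = j then 1 else 0 :=
    orthonormal_iff_ite.mp B₁.orthonormal
  have hηη : ⟪η, η⟫_ℂ = 1 := by
    rw [hηdef]
    simpa using hite ⟨0, hd0⟩ ⟨0, hd0⟩
  -- the real-linear map whose kernel provides `v`
  set f₁ : EuclideanSpace ℂ (Fin d) →ₗ[ℝ] ℝ :=
    Complex.imLm ∘ₗ ((innerₛₗ ℂ η).restrictScalars ℝ) with hf₁
  set f₂ : EuclideanSpace ℂ (Fin d) →ₗ[ℝ] (Fin d → ℝ) :=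
    LinearMap.pi (fun k => Complex.reLm ∘ₗ
      (((LinearMap.mulRight ℂ ((starRingEnd ℂ) ⟪B₂ k, η⟫_ℂ)) ∘ₗ
        (innerₛₗ ℂ (B₂ k))).restrictScalars ℝ)) with hf₂
  set S := f₁.prod f₂ with hSdef
  have hfr : Module.finrank ℝ (EuclideanSpace ℂ (Fin d)) = 2 * d := by
    have := Module.finrank_mul_finrank ℝ ℂ (EuclideanSpace ℂ (Fin d))
    rw [Complex.finrank_real_complex, finrank_euclideanSpace_fin] at this
    omega
  have hker : ∃ v : EuclideanSpace ℂ (Fin d), v ≠ 0 ∧ S v = 0 := by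
    have h1 := LinearMap.finrank_range_add_finrank_ker S
    have h2 : Module.finrank ℝ (LinearMap.range S) ≤ d + 1 := by
      have h3 := Submodule.finrank_le (LinearMap.range S)
      have h4 : Module.finrank ℝ (ℝ × (Fin d → ℝ)) = d + 1 := by
        simp [Module.finrank_prod]
        omega
      omega
    rw [hfr] at h1
    have h5 : 0 < Module.finrank ℝ (LinearMap.ker S) := by omega
    have h6 : LinearMap.ker S ≠ ⊥ := by
      intro hb
      rw [hb, finrank_bot] at h5
      omega
    obtain ⟨v, hv, hv0⟩ := Submodule.exists_mem_ne_zero_of_ne_bot h6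
    exact ⟨v, hv0, hv⟩
  obtain ⟨v, hv0, hSv⟩ := hker
  have hf₁v : (⟪η, v⟫_ℂ).im = 0 := by
    have h := congrArg Prod.fst hSv
    simp only [hSdef, LinearMap.prod_apply, Function.prod, Prod.fst_zero, hf₁,
      LinearMap.comp_apply, LinearMap.restrictScalars_apply, innerₛₗ_apply_apply,
      Complex.imLm_coe] at h
    exact h
  have hf₂v : ∀ k, (⟪B₂ k, v⟫_ℂ * (starRingEnd ℂ) ⟪B₂ k, η⟫_ℂ).re = 0 := by
    intro k
    have h := congrArg (fun p : ℝ × (Fin d → ℝ) => p.2 k) hSv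
    simp only [hSdef, LinearMap.prod_apply, Function.prod, Prod.snd_zero, hf₂,
      LinearMap.pi_apply, LinearMap.comp_apply, LinearMap.restrictScalars_apply,
      innerₛₗ_apply_apply, LinearMap.mulRight_apply, Complex.reLm_coe, Pi.zero_apply] at h
    exact h
  have hrev : (⟪η, v⟫_ℂ).re = 0 := by
    have hsum := B₂.sum_inner_mul_inner η v
    have heq : (⟪η, v⟫_ℂ).re = ∑ k, (⟪B₂ k, v⟫_ℂ * (starRingEnd ℂ) ⟪B₂ k, η⟫_ℂ).re := by
      rw [← hsum, Complex.re_sum]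
      refine Finset.sum_congr rfl (fun k _ => ?_)
      have hconj : (starRingEnd ℂ) ⟪B₂ k, η⟫_ℂ = ⟪η, B₂ k⟫_ℂ := inner_conj_symm η (B₂ k)
      rw [hconj, mul_comm]
    rw [heq]
    exact Finset.sum_eq_zero (fun k _ => hf₂v k)
  have hηv : ⟪η, v⟫_ℂ = 0 := Complex.ext hrev hf₁v
  have hvη : ⟪v, η⟫_ℂ = 0 := by rw [← inner_conj_symm, hηv]; simp
  -- norms of v ± η
  have hplus : ⟪η, v + η⟫_ℂ = 1 := by rw [inner_add_right, hηv, hηη]; ring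
  have hvpη : v + η ≠ 0 := by
    intro h
    rw [h, inner_zero_right] at hplus
    exact zero_ne_one hplus
  set N : ℝ := ‖v + η‖ with hNdef
  have hNpos : 0 < N := norm_pos_iff.mpr hvpη
  have hNc : ((N : ℂ)) ≠ 0 := by
    simp only [ne_eq, Complex.ofReal_eq_zero]
    exact ne_of_gt hNpos
  have hNinv : ‖((N : ℂ))⁻¹‖ = N⁻¹ := by
    rw [norm_inv, Complex.norm_real, Real.norm_eq_abs, abs_of_pos hNpos]
  have hnormeq : ‖v - η‖ = ‖v + η‖ := by
    have ha := @norm_add_sq ℂ _ _ _ _ v η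
    have hb := @norm_sub_sq ℂ _ _ _ _ v η
    rw [hvη] at ha hb
    simp only [map_zero, mul_zero, add_zero, sub_zero] at ha hb
    nlinarith [norm_nonneg (v - η), norm_nonneg (v + η)]
  -- the key probability computation
  have key : ∀ ξ : EuclideanSpace ℂ (Fin d),
      (⟪ξ, v⟫_ℂ * (starRingEnd ℂ) ⟪ξ, η⟫_ℂ).re = 0 →
      ‖⟪ξ, ((N : ℂ))⁻¹ • (v + η)⟫_ℂ‖ ^ 2 = ‖⟪ξ, ((N : ℂ))⁻¹ • (v - η)⟫_ℂ‖ ^ 2 := by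
    intro ξ hξ
    rw [inner_smul_right, inner_smul_right, inner_add_right, inner_sub_right,
      norm_mul, norm_mul, mul_pow, mul_pow, norm_sq_add_eq_sub' hξ]
  refine ⟨((N : ℂ))⁻¹ • (v + η), ((N : ℂ))⁻¹ • (v - η), ?_, ?_, ?_, ?_, ?_⟩
  · rw [norm_smul, hNinv, ← hNdef, inv_mul_cancel₀ (ne_of_gt hNpos)]
  · rw [norm_smul, hNinv, hnormeq, ← hNdef, inv_mul_cancel₀ (ne_of_gt hNpos)]
  · rintro ⟨c, hc⟩
    have hc' : v + η = c • (v - η) := by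
      have h := congrArg (fun x : EuclideanSpace ℂ (Fin d) => (N : ℂ) • x) hc
      simp only [smul_smul] at h
      rw [mul_inv_cancel₀ hNc, one_smul] at h
      have hcc : (N : ℂ) * (c * (N : ℂ)⁻¹) = c := by field_simp
      rw [hcc] at h
      exact h
    have h1 : (1 : ℂ) = -c := by
      rw [← hplus, hc', inner_smul_right, inner_sub_right, hηv, hηη]; ring
    have hc1 : c = -1 := by linear_combination h1
    have h2 : ⟪v, v + η⟫_ℂ = c * ⟪v, v⟫_ℂ := by
      rw [hc', inner_smul_right, inner_sub_right, hvη]; ring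
    rw [inner_add_right, hvη, add_zero, hc1] at h2
    have hvv : ⟪v, v⟫_ℂ = 0 := by linear_combination h2 / 2
    exact hv0 (inner_self_eq_zero.mp hvv)
  · intro j
    by_cases hj : j = (⟨0, hd0⟩ : Fin d)
    · apply key
      subst hj
      rw [← hηdef, hηv, zero_mul]
      simp
    · apply key
      have h0 : ⟪B₁ j, η⟫_ℂ = 0 := by
        rw [hηdef, hite]
        simp [hj]
      rw [h0, map_zero, mul_zero]
      simp
  · intro j
    exact key (B₂ j) (hf₂v j)
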